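/- Let X be a perfect Polish space and f : [X]² → [r] a Baire measurable coloring such that each color class is non-meagre in X². Then there exist disjoint Cantor sets C₁,…,C_s ⊆ X (for some s ≤ 2r) such that each [C_i]² is monochromatic, each bipartite pair C_i × C_j is monochromatic, and all r colors appear among these cliques and bipartite graphs. -/

import Mathlib

open Set Metric Topology Filter ENNReal

namespace Stmt19

variable {X : Type*} [MetricSpace X]


/-- Persistence of a symmetric open set in a box: every nonempty open subbox
contains an off-diagonal pair belonging to `S`. -/

def Pers (S : Set (X × X)) (B : Set X) : Prop :=
  ∀ B', B' ⊆ B → IsOpen B' → B'.Nonempty → ∃ x y, x ∈ B' ∧ y ∈ B' ∧ x ≠ y ∧ (x, y) ∈ S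

lemma Pers.mono {S : Set (X × X)} {B B' : Set X} (h : Pers S B) (hs : B' ⊆ B) : Pers S B' :=
  fun B'' h1 h2 h3 => h B'' (h1.trans hs) h2 h3

lemma two_mul_lt {x y : X} (h : x ≠ y) {ε : ℝ≥0∞} (hε : ε ≤ min (edist x y) 1 / 2 / 2) :
    2 * ε < edist x y := by
  have h0 : min (edist x y) 1 ≠ 0 := by
    simp only [ne_eq, min_eq_iff, not_or]
    constructor <;> rintro ⟨h1, -⟩
    · exact (edist_pos.2 h).ne' h1
    · exact one_ne_zero h1
  have ht : min (edist x y) 1 ≠ ⊤ :=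
    ne_top_of_le_ne_top ENNReal.one_ne_top (min_le_right _ _)
  calc 2 * ε ≤ 2 * (min (edist x y) 1 / 2 / 2) := by gcongr
    _ = min (edist x y) 1 / 2 := by rw [two_mul, ENNReal.add_halves]
    _ < min (edist x y) 1 := ENNReal.half_lt_self (by simpa using h0) (by simpa using ht)
    _ ≤ edist x y := min_le_left _ _

lemma disj_closedBall {x y : X} {ε : ℝ≥0∞} (h : 2 * ε < edist x y) :
    Disjoint (EMetric.closedBall x ε) (EMetric.closedBall y ε) := by
  rw [Set.disjoint_left]
  intro z hz hz'
  replace hz : edist z x ≤ ε := hz; replace hz' : edist z y ≤ ε := hz'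
  have : edist x y ≤ 2 * ε := by
    calc edist x y ≤ edist x z + edist z y := edist_triangle x z y
      _ ≤ ε + ε := add_le_add (by rwa [edist_comm]) hz'
      _ = 2 * ε := (two_mul ε).symm
  exact absurd h (not_lt.2 this)

lemma isClosed_ecb {x : X} {ε : ℝ≥0∞} : IsClosed (EMetric.closedBall x ε) :=
  isClosed_le (Continuous.edist continuous_id continuous_const) continuous_const

lemma closure_subset_of_subset_ball {A : Set X} {x : X} {ε : ℝ≥0∞}
    (h : A ⊆ EMetric.ball x ε) : closure A ⊆ EMetric.closedBall x ε :=
  (closure_mono h).trans (isClosed_ecb.closure_subset_iff.2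
    EMetric.ball_subset_closedBall)

lemma diam_le_of_subset_ball {A : Set X} {x : X} {ε : ℝ≥0∞}
    (h : A ⊆ EMetric.ball x ε) : EMetric.diam A ≤ 2 * ε :=
  (EMetric.diam_mono h).trans EMetric.diam_ball

/-- open nonempty sets in perfect T1 spaces avoid finite sets -/

lemma open_diff_finset_nonempty [PerfectSpace X] {U : Set X} (hU : IsOpen U)
    (hne : U.Nonempty) (F : Finset X) : (U \ (F : Set X)).Nonempty := by
  classical
  obtain ⟨x, hx⟩ := hne
  have h1 : (U ∩ ((F.erase x : Finset X) : Set X)ᶜ) ∈ 𝓝 x := by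
    refine Filter.inter_mem (hU.mem_nhds hx) ?_
    refine ((Set.Finite.isClosed ?_).isOpen_compl).mem_nhds ?_
    · exact (F.erase x).finite_toSet
    · simp
  have h2 : (U ∩ ((F.erase x : Finset X) : Set X)ᶜ) ∩ {y | y ≠ x} ∈ 𝓝[≠] x :=
    Filter.inter_mem (mem_nhdsWithin_of_mem_nhds h1) self_mem_nhdsWithin
  obtain ⟨y, ⟨⟨hyU, hyF⟩, hyx⟩⟩ := Filter.nonempty_of_mem h2
  refine ⟨y, hyU, fun hyF' => hyF ?_⟩
  simp only [Finset.coe_erase, Set.mem_diff, Set.mem_singleton_iff]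
  exact ⟨hyF', hyx⟩

/-- pick a pair of distinct points of an open set in `S`, given `S` dense-ish -/

lemma exists_pair_mem [PerfectSpace X] {B : Set X} (hB : IsOpen B) (hne : B.Nonempty)
    {S : Set (X × X)} (hS : Dense S) :
    ∃ x y, x ∈ B ∧ y ∈ B ∧ x ≠ y ∧ (x, y) ∈ S := by
  -- first find an off-diagonal pair in B ×ˢ B
  obtain ⟨x, hx⟩ := hne
  have h2 : B ∩ {y | y ≠ x} ∈ 𝓝[≠] x :=
    Filter.inter_mem (mem_nhdsWithin_of_mem_nhds (hB.mem_nhds hx)) self_mem_nhdsWithin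
  obtain ⟨y, hyB, hyx⟩ := Filter.nonempty_of_mem h2
  have hT : IsOpen ((B ×ˢ B) ∩ {p : X × X | p.1 ≠ p.2}) :=
    (hB.prod hB).inter isClosed_diagonal.isOpen_compl
  have hTne : ((B ×ˢ B) ∩ {p : X × X | p.1 ≠ p.2}).Nonempty :=
    ⟨(y, x), ⟨⟨hyB, hx⟩, hyx⟩⟩
  obtain ⟨p, hp1, hp2⟩ := hS.inter_open_nonempty _ hT hTne
  exact ⟨p.1, p.2, hp1.1.1, hp1.1.2, hp1.2, hp2⟩

lemma pair_shrink {A B : Set X} {W : Set (X × X)} (hA : IsOpen A) (hB : IsOpen B)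
    (hW : IsOpen W) (h : ((A ×ˢ B) ∩ W).Nonempty) :
    ∃ U V : Set X, IsOpen U ∧ IsOpen V ∧ U.Nonempty ∧ V.Nonempty ∧ U ⊆ A ∧ V ⊆ B ∧
      U ×ˢ V ⊆ W := by
  obtain ⟨p, ⟨hpA, hpB⟩, hpW⟩ := h
  obtain ⟨u, v, hu, hv, hp1, hp2, huv⟩ := isOpen_prod_iff.1 hW p.1 p.2 hpW
  refine ⟨A ∩ u, B ∩ v, hA.inter hu, hB.inter hv, ⟨p.1, hpA, hp1⟩, ⟨p.2, hpB, hp2⟩,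
    inter_subset_left, inter_subset_left, ?_⟩
  exact fun q hq => huv ⟨hq.1.2, hq.2.2⟩

lemma shrink_pass {ι : Type*} [DecidableEq ι] (ps : List (ι × ι)) {B : ι → Set X}
    (hop : ∀ i, IsOpen (B i)) (hne : ∀ i, (B i).Nonempty)
    {W : Set (X × X)} (hW : IsOpen W) (hWd : Dense W) :
    ∃ B' : ι → Set X, (∀ i, B' i ⊆ B i) ∧ (∀ i, IsOpen (B' i)) ∧ (∀ i, (B' i).Nonempty) ∧
      ∀ p ∈ ps, p.1 ≠ p.2 → B' p.1 ×ˢ B' p.2 ⊆ W := by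
  induction ps with
  | nil => exact ⟨B, fun _ => subset_rfl, hop, hne, by simp⟩
  | cons q ps ih =>
    obtain ⟨B', hsub, hop', hne', hps⟩ := ih
    by_cases hq : q.1 = q.2
    · exact ⟨B', hsub, hop', hne', by
        intro p hp hpne
        rcases List.mem_cons.1 hp with rfl | hp
        · exact absurd hq hpne
        · exact hps p hp hpne⟩
    · have hprod : ((B' q.1 ×ˢ B' q.2) ∩ W).Nonempty := by
        rcases hWd.inter_open_nonempty _ ((hop' q.1).prod (hop' q.2))
          ((hne' q.1).prod (hne' q.2)) with ⟨p, hp1, hp2⟩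
        exact ⟨p, hp1, hp2⟩
      obtain ⟨U, V, hUo, hVo, hUne, hVne, hUs, hVs, hUV⟩ :=
        pair_shrink (hop' q.1) (hop' q.2) hW hprod
      refine ⟨Function.update (Function.update B' q.1 U) q.2 V, ?_, ?_, ?_, ?_⟩
      · intro i
        rcases eq_or_ne i q.2 with rfl | h2
        · simp only [Function.update_self]
          exact hVs.trans (hsub _)
        rcases eq_or_ne i q.1 with rfl | h1
        · simp only [Function.update_of_ne h2, Function.update_self]
          exact hUs.trans (hsub _)
        · simp only [Function.update_of_ne h2, Function.update_of_ne h1]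
          exact hsub _
      · intro i
        rcases eq_or_ne i q.2 with rfl | h2
        · simpa using hVo
        rcases eq_or_ne i q.1 with rfl | h1
        · simpa [Function.update_of_ne h2] using hUo
        · simpa [Function.update_of_ne h2, Function.update_of_ne h1] using hop' i
      · intro i
        rcases eq_or_ne i q.2 with rfl | h2
        · simpa using hVne
        rcases eq_or_ne i q.1 with rfl | h1
        · simpa [Function.update_of_ne h2] using hUne
        · simpa [Function.update_of_ne h2, Function.update_of_ne h1] using hne' i
      · have hmono : ∀ i, Function.update (Function.update B' q.1 U) q.2 V i ⊆ B' i := by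
          intro i
          rcases eq_or_ne i q.2 with rfl | h2
          · simpa using hVs
          rcases eq_or_ne i q.1 with rfl | h1
          · simpa [Function.update_of_ne h2] using hUs
          · simp [Function.update_of_ne h2, Function.update_of_ne h1]
        intro p hp hpne
        rcases List.mem_cons.1 hp with rfl | hp
        · have e1 : Function.update (Function.update B' p.1 U) p.2 V p.1 = U := by
            rw [Function.update_of_ne hpne, Function.update_self]
          have e2 : Function.update (Function.update B' p.1 U) p.2 V p.2 = V := by
            rw [Function.update_self]
          rw [e1, e2]; exact hUV
        · exact fun z hz => hps p hp hpne ⟨hmono _ hz.1, hmono _ hz.2⟩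

/-- A pass assigning to every listed ordered pair a color whose open set contains
the product, after shrinking. -/

lemma color_pass {ι : Type*} [DecidableEq ι] {r : ℕ} {O : Fin r → Set (X × X)}
    (hO : ∀ c, IsOpen (O c)) (hOd : Dense (⋃ c, O c)) (ps : List (ι × ι)) {B : ι → Set X}
    (hop : ∀ i, IsOpen (B i)) (hne : ∀ i, (B i).Nonempty) :
    ∃ B' : ι → Set X, (∀ i, B' i ⊆ B i) ∧ (∀ i, IsOpen (B' i)) ∧ (∀ i, (B' i).Nonempty) ∧
      ∀ p ∈ ps, p.1 ≠ p.2 → ∃ c, B' p.1 ×ˢ B' p.2 ⊆ O c := by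
  induction ps with
  | nil => exact ⟨B, fun _ => subset_rfl, hop, hne, by simp⟩
  | cons q ps ih =>
    obtain ⟨B', hsub, hop', hne', hps⟩ := ih
    by_cases hq : q.1 = q.2
    · refine ⟨B', hsub, hop', hne', ?_⟩
      intro p hp hpne
      rcases List.mem_cons.1 hp with rfl | hp
      · exact absurd hq hpne
      · exact hps p hp hpne
    · obtain ⟨p0, hp1, hp2⟩ := hOd.inter_open_nonempty _ ((hop' q.1).prod (hop' q.2))
        ((hne' q.1).prod (hne' q.2))
      obtain ⟨c, hc⟩ := mem_iUnion.1 hp2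
      obtain ⟨U, V, hUo, hVo, hUne, hVne, hUs, hVs, hUV⟩ :=
        pair_shrink (hop' q.1) (hop' q.2) (hO c) ⟨p0, hp1, hc⟩
      have hmono : ∀ i, Function.update (Function.update B' q.1 U) q.2 V i ⊆ B' i := by
        intro i
        rcases eq_or_ne i q.2 with rfl | h2
        · simpa using hVs
        rcases eq_or_ne i q.1 with rfl | h1
        · simpa [Function.update_of_ne h2] using hUs
        · simp [Function.update_of_ne h2, Function.update_of_ne h1]
      refine ⟨Function.update (Function.update B' q.1 U) q.2 V,
        fun i => (hmono i).trans (hsub i), ?_, ?_, ?_⟩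
      · intro i
        rcases eq_or_ne i q.2 with rfl | h2
        · simpa using hVo
        rcases eq_or_ne i q.1 with rfl | h1
        · simpa [Function.update_of_ne h2] using hUo
        · simpa [Function.update_of_ne h2, Function.update_of_ne h1] using hop' i
      · intro i
        rcases eq_or_ne i q.2 with rfl | h2
        · simpa using hVne
        rcases eq_or_ne i q.1 with rfl | h1
        · simpa [Function.update_of_ne h2] using hUne
        · simpa [Function.update_of_ne h2, Function.update_of_ne h1] using hne' i
      · intro p hp hpne
        rcases List.mem_cons.1 hp with rfl | hp
        · have e1 : Function.update (Function.update B' p.1 U) p.2 V p.1 = U := by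
            rw [Function.update_of_ne hpne, Function.update_self]
          have e2 : Function.update (Function.update B' p.1 U) p.2 V p.2 = V := by
            rw [Function.update_self]
          rw [e1, e2]; exact ⟨c, hUV⟩
        · obtain ⟨c', hc'⟩ := hps p hp hpne
          exact ⟨c', fun z hz => hc' ⟨hmono _ hz.1, hmono _ hz.2⟩⟩

/-- every nonempty open box has a nonempty open subbox with a persistent color. -/

lemma exists_pers_subbox [PerfectSpace X] {r : ℕ} {O : Fin r → Set (X × X)}
    (hO : ∀ c, IsOpen (O c)) (hOd : Dense (⋃ c, O c)) {B : Set X}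
    (hB : IsOpen B) (hBn : B.Nonempty) :
    ∃ B', B' ⊆ B ∧ IsOpen B' ∧ B'.Nonempty ∧ ∃ c, Pers (O c) B' := by
  have key : ∀ l : List (Fin r), ∃ B', B' ⊆ B ∧ IsOpen B' ∧ B'.Nonempty ∧
      ((∃ c, Pers (O c) B') ∨
        ∀ c ∈ l, ∀ x y, x ∈ B' → y ∈ B' → x ≠ y → (x, y) ∉ O c) := by
    intro l
    induction l with
    | nil => exact ⟨B, subset_rfl, hB, hBn, Or.inr (by simp)⟩
    | cons c l ih =>
      obtain ⟨B', hsub, hop, hne, hcase⟩ := ih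
      rcases hcase with h | h
      · exact ⟨B', hsub, hop, hne, Or.inl h⟩
      by_cases hp : Pers (O c) B'
      · exact ⟨B', hsub, hop, hne, Or.inl ⟨c, hp⟩⟩
      · rw [Pers] at hp
        push_neg at hp
        obtain ⟨B'', hsub', hop', hne', hemp⟩ := hp
        refine ⟨B'', hsub'.trans hsub, hop', hne', Or.inr ?_⟩
        intro c' hc' x y hx hy hxy hO'
        rcases List.mem_cons.1 hc' with rfl | hc'
        · exact hemp x y hx hy hxy hO'
        · exact h c' hc' x y (hsub' hx) (hsub' hy) hxy hO'
  obtain ⟨B', hsub, hop, hne, hcase⟩ := key (List.finRange r)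
  rcases hcase with h | h
  · exact ⟨B', hsub, hop, hne, h⟩
  · exfalso
    obtain ⟨x, y, hx, hy, hxy, hS⟩ := exists_pair_mem hop hne hOd
    obtain ⟨c, hc⟩ := mem_iUnion.1 hS
    exact h c (List.mem_finRange c) x y hx hy hxy hc

/-- persistence pass: shrink each listed box to one with a persistent color. -/

lemma pers_pass {ι : Type*} [DecidableEq ι] [PerfectSpace X] {r : ℕ}
    {O : Fin r → Set (X × X)} (hO : ∀ c, IsOpen (O c)) (hOd : Dense (⋃ c, O c))
    (l : List ι) {B : ι → Set X} (hop : ∀ i, IsOpen (B i)) (hne : ∀ i, (B i).Nonempty) :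
    ∃ B' : ι → Set X, (∀ i, B' i ⊆ B i) ∧ (∀ i, IsOpen (B' i)) ∧ (∀ i, (B' i).Nonempty) ∧
      ∀ i ∈ l, ∃ c, Pers (O c) (B' i) := by
  induction l with
  | nil => exact ⟨B, fun _ => subset_rfl, hop, hne, by simp⟩
  | cons i l ih =>
    obtain ⟨B', hsub, hop', hne', hl⟩ := ih
    obtain ⟨B'', hsub', hop'', hne'', c, hc⟩ := exists_pers_subbox hO hOd (hop' i) (hne' i)
    refine ⟨Function.update B' i B'', ?_, ?_, ?_, ?_⟩
    · intro j
      rcases eq_or_ne j i with rfl | h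
      · simpa using hsub'.trans (hsub j)
      · simpa [Function.update_of_ne h] using hsub j
    · intro j
      rcases eq_or_ne j i with rfl | h
      · simpa using hop''
      · simpa [Function.update_of_ne h] using hop' j
    · intro j
      rcases eq_or_ne j i with rfl | h
      · simpa using hne''
      · simpa [Function.update_of_ne h] using hne' j
    · intro j hj
      rcases eq_or_ne j i with rfl | h
      · exact ⟨c, by simpa using hc⟩
      · obtain ⟨c', hc'⟩ := hl j (by
          rcases List.mem_cons.1 hj with rfl | hj'
          · exact absurd rfl h
          · exact hj')
        exact ⟨c', hc'.mono (by simp [Function.update_of_ne h])⟩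

/-- choose pairwise distinct points in listed boxes. -/

lemma distinct_points {ι : Type*} [DecidableEq ι] [PerfectSpace X] (l : List ι)
    (hl : l.Nodup) {B : ι → Set X} (hop : ∀ i, IsOpen (B i)) (hne : ∀ i, (B i).Nonempty) :
    ∃ p : ι → X, (∀ i, p i ∈ B i) ∧ ∀ i ∈ l, ∀ j ∈ l, i ≠ j → p i ≠ p j := by
  classical
  induction l with
  | nil =>
    exact ⟨fun i => (hne i).choose, fun i => (hne i).choose_spec, by simp⟩
  | cons i l ih =>
    obtain ⟨p, hp, hpne⟩ := ih (List.nodup_cons.1 hl).2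
    obtain ⟨x, hx, hxF⟩ := open_diff_finset_nonempty (hop i) (hne i) (l.map p).toFinset
    refine ⟨Function.update p i x, ?_, ?_⟩
    · intro j
      rcases eq_or_ne j i with rfl | h
      · simpa using hx
      · simpa [Function.update_of_ne h] using hp j
    · intro a ha b hb hab
      have hil : i ∉ l := (List.nodup_cons.1 hl).1
      have hup : ∀ j, j ∈ l → Function.update p i x j = p j := fun j hj =>
        Function.update_of_ne (fun h => hil (by rw [← h]; exact hj)) _ _
      have hxnotin : ∀ j, j ∈ l → x ≠ p j := by
        intro j hj h
        exact hxF (by simp only [List.coe_toFinset, List.mem_map, Set.mem_setOf_eq]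
                      exact ⟨j, hj, h.symm⟩)
      by_cases hai : a = i
      · subst hai
        have hbl : b ∈ l := by
          rcases List.mem_cons.1 hb with rfl | hb'
          · exact absurd rfl hab
          · exact hb'
        rw [Function.update_self, hup b hbl]
        exact hxnotin b hbl
      · have hal : a ∈ l := by
          rcases List.mem_cons.1 ha with rfl | ha'
          · exact absurd rfl hai
          · exact ha'
        by_cases hbi : b = i
        · subst hbi
          rw [Function.update_self, hup a hal]
          exact fun h => hxnotin a hal h.symm
        · have hbl : b ∈ l := by
            rcases List.mem_cons.1 hb with rfl | hb'
            · exact absurd rfl hbi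
            · exact hb'
          rw [hup a hal, hup b hbl]
          exact hpne a hal b hbl hab

/-- recursive chain construction. -/

lemma nat_rec_chain {P : ℕ → Type*} {R : ∀ n, P n → P (n+1) → Prop} (p0 : P 0)
    (h : ∀ n (x : P n), ∃ y, R n x y) :
    ∃ F : ∀ n, P n, F 0 = p0 ∧ ∀ n, R n (F n) (F (n+1)) := by
  choose f hf using h
  exact ⟨fun n => Nat.rec p0 f n, rfl, fun n => hf n _⟩

variable {s r : ℕ}

def col (ci : Fin s → Fin r) (v : Fin s → Fin s → Fin r) (k k' : Fin s) : Fin r :=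
  if k = k' then ci k else v k k'

structure Inv (O : Fin r → Set (X × X)) (W : ℕ → Set (X × X)) (ci : Fin s → Fin r)
    (v : Fin s → Fin s → Fin r) (n : ℕ) (L : Fin s → (Fin n → Bool) → Set X) : Prop where
  ne : ∀ k σ, (L k σ).Nonempty
  op : ∀ k σ, IsOpen (L k σ)
  dia : ∀ k σ, EMetric.diam (L k σ) ≤ 2⁻¹ ^ n
  dis : ∀ k σ k' σ', (k ≠ k' ∨ σ ≠ σ') → Disjoint (closure (L k σ)) (closure (L k' σ'))
  inW : ∀ k σ k' σ', (k ≠ k' ∨ σ ≠ σ') → L k σ ×ˢ L k' σ' ⊆ W n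
  inO : ∀ k σ k' σ', (k ≠ k' ∨ σ ≠ σ') → L k σ ×ˢ L k' σ' ⊆ O (col ci v k k')
  prs : ∀ k σ, Pers (O (ci k)) (L k σ)

lemma inv_step {O : Fin r → Set (X × X)} {W : ℕ → Set (X × X)} {ci : Fin s → Fin r}
    {v : Fin s → Fin s → Fin r}
    (hO : ∀ c, IsOpen (O c)) (hOs : ∀ c (p : X × X), p ∈ O c → p.swap ∈ O c)
    (hWo : ∀ m, IsOpen (W m)) (hWd : ∀ m, Dense (W m))
    {n : ℕ} {L : Fin s → (Fin n → Bool) → Set X} (h : Inv O W ci v n L) :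
    ∃ L' : Fin s → (Fin (n+1) → Bool) → Set X, Inv O W ci v (n+1) L' ∧
      ∀ k σ b, closure (L' k (Fin.snoc σ b)) ⊆ L k σ := by
  classical
  -- choose witness pairs via persistence
  have hwit : ∀ k (σ : Fin n → Bool), ∃ x y, x ∈ L k σ ∧ y ∈ L k σ ∧ x ≠ y ∧
      (x, y) ∈ O (ci k) := fun k σ => h.prs k σ (L k σ) subset_rfl (h.op k σ) (h.ne k σ)
  choose x y hx hy hxy hOm using hwit
  have hUV : ∀ k (σ : Fin n → Bool), ∃ U' V' : Set X, IsOpen U' ∧ IsOpen V' ∧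
      x k σ ∈ U' ∧ y k σ ∈ V' ∧ U' ×ˢ V' ⊆ O (ci k) := by
    intro k σ
    obtain ⟨U', V', hU, hV, h1, h2, hsub⟩ := isOpen_prod_iff.1 (hO (ci k)) _ _ (hOm k σ)
    exact ⟨U', V', hU, hV, h1, h2, hsub⟩
  choose U V hUo hVo hxU hyV hUVO using hUV
  have hr1 : ∀ k (σ : Fin n → Bool), ∃ e, 0 < e ∧ EMetric.ball (x k σ) e ⊆ L k σ := by
    intro k σ
    obtain ⟨e, he, hb⟩ := EMetric.isOpen_iff.1 (h.op k σ) _ (hx k σ)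
    exact ⟨e, he, hb⟩
  choose e1 he1pos he1 using hr1
  have hr2 : ∀ k (σ : Fin n → Bool), ∃ e, 0 < e ∧ EMetric.ball (y k σ) e ⊆ L k σ := by
    intro k σ
    obtain ⟨e, he, hb⟩ := EMetric.isOpen_iff.1 (h.op k σ) _ (hy k σ)
    exact ⟨e, he, hb⟩
  choose e2 he2pos he2 using hr2
  set ε : Fin s → (Fin n → Bool) → ℝ≥0∞ := fun k σ =>
    min (min (min (e1 k σ) 1 / 2) (min (e2 k σ) 1 / 2))
      (min (min (edist (x k σ) (y k σ)) 1 / 2 / 2) (2⁻¹ ^ (n+2))) with hεdef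
  have hεpos : ∀ k σ, 0 < ε k σ := by
    intro k σ
    have h1 : (0:ℝ≥0∞) < min (e1 k σ) 1 / 2 :=
      ENNReal.div_pos (lt_min (he1pos k σ) one_pos).ne' (by norm_num)
    have h2 : (0:ℝ≥0∞) < min (e2 k σ) 1 / 2 :=
      ENNReal.div_pos (lt_min (he2pos k σ) one_pos).ne' (by norm_num)
    have h3 : (0:ℝ≥0∞) < min (edist (x k σ) (y k σ)) 1 / 2 / 2 :=
      ENNReal.div_pos (ne_of_gt (ENNReal.div_pos
        (lt_min (edist_pos.2 (hxy k σ)) one_pos).ne' (by norm_num))) (by norm_num)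
    have h4 : (0:ℝ≥0∞) < 2⁻¹ ^ (n+2) := ENNReal.pow_pos (by norm_num) _
    exact lt_min (lt_min h1 h2) (lt_min h3 h4)
  have hεe1 : ∀ k σ, ε k σ < e1 k σ := by
    intro k σ
    calc ε k σ ≤ min (e1 k σ) 1 / 2 := le_trans (min_le_left _ _) (min_le_left _ _)
      _ < min (e1 k σ) 1 := ENNReal.half_lt_self (lt_min (he1pos k σ) one_pos).ne'
          (ne_top_of_le_ne_top one_ne_top (min_le_right _ _))
      _ ≤ e1 k σ := min_le_left _ _
  have hεe2 : ∀ k σ, ε k σ < e2 k σ := by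
    intro k σ
    calc ε k σ ≤ min (e2 k σ) 1 / 2 := le_trans (min_le_left _ _) (min_le_right _ _)
      _ < min (e2 k σ) 1 := ENNReal.half_lt_self (lt_min (he2pos k σ) one_pos).ne'
          (ne_top_of_le_ne_top one_ne_top (min_le_right _ _))
      _ ≤ e2 k σ := min_le_left _ _
  have hεd : ∀ k σ, 2 * ε k σ < edist (x k σ) (y k σ) := by
    intro k σ
    exact two_mul_lt (hxy k σ) (le_trans (min_le_right _ _) (min_le_left _ _))
  have hεdiam : ∀ k σ, 2 * ε k σ ≤ 2⁻¹ ^ (n+1) := by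
    intro k σ
    have : ε k σ ≤ 2⁻¹ ^ (n+2) := le_trans (min_le_right _ _) (min_le_right _ _)
    calc 2 * ε k σ ≤ 2 * 2⁻¹ ^ (n+2) := by gcongr
      _ = 2⁻¹ ^ (n+1) := by
          rw [pow_succ, mul_comm ((2:ℝ≥0∞)⁻¹ ^ (n+1)) 2⁻¹, ← mul_assoc,
            ENNReal.mul_inv_cancel (by norm_num) (by norm_num), one_mul]
  -- children candidate boxes
  set A : Fin s → (Fin n → Bool) → Bool → Set X := fun k σ b =>
    L k σ ∩ (bif b then V k σ else U k σ) ∩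
      EMetric.ball (bif b then y k σ else x k σ) (ε k σ) with hAdef
  have hAop : ∀ k σ b, IsOpen (A k σ b) := by
    intro k σ b
    exact ((h.op k σ).inter (by cases b <;> simp [hUo, hVo])).inter EMetric.isOpen_ball
  have hAne : ∀ k σ b, (A k σ b).Nonempty := by
    intro k σ b
    cases b
    · exact ⟨x k σ, ⟨hx k σ, by simp [hxU]⟩, by simp; exact EMetric.mem_ball_self (hεpos k σ)⟩
    · exact ⟨y k σ, ⟨hy k σ, by simp [hyV]⟩, by simp; exact EMetric.mem_ball_self (hεpos k σ)⟩
  have hAsub : ∀ k σ b, A k σ b ⊆ L k σ := fun k σ b z hz => hz.1.1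
  have hAball : ∀ k σ b, A k σ b ⊆ EMetric.ball (bif b then y k σ else x k σ) (ε k σ) :=
    fun k σ b z hz => hz.2
  have hAcl : ∀ k σ b, closure (A k σ b) ⊆ L k σ := by
    intro k σ b
    refine (closure_subset_of_subset_ball (hAball k σ b)).trans ?_
    cases b
    · exact fun z hz => he1 k σ (lt_of_le_of_lt hz (hεe1 k σ))
    · exact fun z hz => he2 k σ (lt_of_le_of_lt hz (hεe2 k σ))
  have hAdisj : ∀ k σ b b', b ≠ b' →
      Disjoint (closure (A k σ b)) (closure (A k σ b')) := by
    intro k σ b b' hbb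
    have hd := disj_closedBall (hεd k σ)
    have hf : closure (A k σ false) ⊆ EMetric.closedBall (x k σ) (ε k σ) :=
      closure_subset_of_subset_ball (fun z hz => hz.2)
    have ht : closure (A k σ true) ⊆ EMetric.closedBall (y k σ) (ε k σ) :=
      closure_subset_of_subset_ball (fun z hz => hz.2)
    cases b
    · cases b'
      · exact absurd rfl hbb
      · exact hd.mono hf ht
    · cases b'
      · exact hd.symm.mono ht hf
      · exact absurd rfl hbb
  have hAdiam : ∀ k σ b, EMetric.diam (A k σ b) ≤ 2⁻¹ ^ (n+1) :=
    fun k σ b => (diam_le_of_subset_ball (hAball k σ b)).trans (hεdiam k σ)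
  have hAO : ∀ k σ b b', b ≠ b' → A k σ b ×ˢ A k σ b' ⊆ O (ci k) := by
    intro k σ b b' hbb
    have hft : A k σ false ×ˢ A k σ true ⊆ O (ci k) := fun p hp =>
      hUVO k σ ⟨hp.1.1.2, hp.2.1.2⟩
    have htf : A k σ true ×ˢ A k σ false ⊆ O (ci k) := by
      intro p hp
      have h2 := hOs (ci k) (p.2, p.1) (hUVO k σ ⟨hp.2.1.2, hp.1.1.2⟩)
      simpa using h2
    cases b
    · cases b'
      · exact absurd rfl hbb
      · exact hft
    · cases b'
      · exact htf
      · exact absurd rfl hbb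
  -- pre-level
  set L1 : Fin s → (Fin (n+1) → Bool) → Set X :=
    fun k τ => A k (Fin.init τ) (τ (Fin.last n)) with hL1def
  -- shrink to get into W (n+1)
  obtain ⟨B', hsub', hop', hne', hW'⟩ :=
    shrink_pass (X := X) (ι := Fin s × (Fin (n+1) → Bool))
      ((Finset.univ : Finset ((Fin s × (Fin (n+1) → Bool)) × (Fin s × (Fin (n+1) → Bool)))).toList)
      (B := fun q => L1 q.1 q.2)
      (fun q => hAop _ _ _) (fun q => hAne _ _ _) (hWo (n+1)) (hWd (n+1))
  set L' : Fin s → (Fin (n+1) → Bool) → Set X := fun k τ => B' (k, τ) with hL'def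
  have hL'A : ∀ k τ, L' k τ ⊆ A k (Fin.init τ) (τ (Fin.last n)) := fun k τ => hsub' (k, τ)
  have hRel : ∀ k σ b, closure (L' k (Fin.snoc σ b)) ⊆ L k σ := by
    intro k σ b
    have h1 : L' k (Fin.snoc σ b) ⊆ A k σ b := by
      have := hL'A k (Fin.snoc σ b)
      rwa [Fin.init_snoc, Fin.snoc_last] at this
    exact (closure_mono h1).trans (hAcl k σ b)
  have hL'L : ∀ k τ, L' k τ ⊆ L k (Fin.init τ) :=
    fun k τ => (hL'A k τ).trans (hAsub _ _ _)
  -- case analysis on distinct child nodes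
  have hcases : ∀ (k k' : Fin s) (τ τ' : Fin (n+1) → Bool), (k ≠ k' ∨ τ ≠ τ') →
      (k ≠ k' ∨ Fin.init τ ≠ Fin.init τ') ∨
      (k = k' ∧ Fin.init τ = Fin.init τ' ∧ τ (Fin.last n) ≠ τ' (Fin.last n)) := by
    intro k k' τ τ' hd
    by_cases hk : k = k'
    · by_cases hi : Fin.init τ = Fin.init τ'
      · refine Or.inr ⟨hk, hi, ?_⟩
        intro hb
        have hττ : τ = τ' := by
          rw [← Fin.snoc_init_self τ, ← Fin.snoc_init_self τ', hi, hb]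
        rcases hd with h | h
        · exact h hk
        · exact h hττ
      · exact Or.inl (Or.inr hi)
    · exact Or.inl (Or.inl hk)
  refine ⟨L', ?_, hRel⟩
  constructor
  · exact fun k τ => hne' (k, τ)
  · exact fun k τ => hop' (k, τ)
  · exact fun k τ => (EMetric.diam_mono (hL'A k τ)).trans (hAdiam _ _ _)
  · -- disjointness
    intro k τ k' τ' hd
    rcases hcases k k' τ τ' hd with hpar | ⟨rfl, hi, hb⟩
    · exact Disjoint.mono (closure_mono (hL'L k τ)) (closure_mono (hL'L k' τ'))
        (h.dis _ _ _ _ hpar)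
    · have h2 : L' k τ' ⊆ A k (Fin.init τ) (τ' (Fin.last n)) := by
        rw [hi]; exact hL'A k τ'
      exact Disjoint.mono (closure_mono (hL'A k τ)) (closure_mono h2)
        (hAdisj k (Fin.init τ) _ _ hb)
  · -- inW
    intro k τ k' τ' hd
    have hne12 : ((k, τ) : Fin s × (Fin (n+1) → Bool)) ≠ (k', τ') := by
      rcases hd with hh | hh
      · exact fun e => hh (congrArg Prod.fst e)
      · exact fun e => hh (congrArg Prod.snd e)
    exact hW' ((k, τ), (k', τ')) (Finset.mem_toList.2 (Finset.mem_univ _)) hne12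
  · -- inO
    intro k τ k' τ' hd
    rcases hcases k k' τ τ' hd with hpar | ⟨rfl, hi, hb⟩
    · exact fun p hp => h.inO k (Fin.init τ) k' (Fin.init τ') hpar
        ⟨hL'L k τ hp.1, hL'L k' τ' hp.2⟩
    · have hcc : col ci v k k = ci k := by simp [col]
      rw [hcc]
      intro p hp
      refine hAO k (Fin.init τ) (τ (Fin.last n)) (τ' (Fin.last n)) hb ⟨hL'A k τ hp.1, ?_⟩
      have h2 := hL'A k τ' hp.2
      rwa [← hi] at h2
  · -- persistence
    intro k τ
    exact (h.prs k (Fin.init τ)).mono (hL'L k τ)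

lemma base_exists [PerfectSpace X] {r : ℕ} (hr : 1 ≤ r) {O : Fin r → Set (X × X)}
    (hO : ∀ c, IsOpen (O c)) (hOd : Dense (⋃ c, O c))
    (hcol : ∀ c, ∃ p : X × X, p ∈ O c ∧ p.1 ≠ p.2)
    {W0 : Set (X × X)} (hW0o : IsOpen W0) (hW0d : Dense W0) :
    ∃ (L : Fin (2*r) → Set X) (ci : Fin (2*r) → Fin r) (v : Fin (2*r) → Fin (2*r) → Fin r),
      (∀ k, IsOpen (L k)) ∧ (∀ k, (L k).Nonempty) ∧ (∀ k, EMetric.diam (L k) ≤ 1) ∧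
      (∀ k k', k ≠ k' → Disjoint (closure (L k)) (closure (L k'))) ∧
      (∀ k k', k ≠ k' → L k ×ˢ L k' ⊆ W0) ∧
      (∀ k k', k ≠ k' → L k ×ˢ L k' ⊆ O (v k k')) ∧
      (∀ k, Pers (O (ci k)) (L k)) ∧
      (∀ c : Fin r, v ⟨2*c.1, by omega⟩ ⟨2*c.1+1, by omega⟩ = c) := by
  classical
  -- initial boxes from the color witnesses
  have hinit : ∀ c : Fin r, ∃ Uc Vc : Set X, IsOpen Uc ∧ IsOpen Vc ∧ Uc.Nonempty ∧
      Vc.Nonempty ∧ Uc ×ˢ Vc ⊆ O c := by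
    intro c
    obtain ⟨p, hp, hpne⟩ := hcol c
    obtain ⟨U, V, hU, hV, h1, h2, hsub⟩ := isOpen_prod_iff.1 (hO c) p.1 p.2 hp
    exact ⟨U, V, hU, hV, ⟨p.1, h1⟩, ⟨p.2, h2⟩, hsub⟩
  choose U0 V0 hU0o hV0o hU0n hV0n hUV0 using hinit
  set P : Fin (2*r) → Set X := fun k =>
    if k.1 % 2 = 0 then U0 ⟨k.1/2, by have := k.isLt; omega⟩
    else V0 ⟨k.1/2, by have := k.isLt; omega⟩ with hPdef
  have hPo : ∀ k, IsOpen (P k) := by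
    intro k
    rw [hPdef]
    dsimp only
    split <;> [exact hU0o _; exact hV0o _]
  have hPn : ∀ k, (P k).Nonempty := by
    intro k
    rw [hPdef]
    dsimp only
    split <;> [exact hU0n _; exact hV0n _]
  have hPdes : ∀ c : Fin r,
      P ⟨2*c.1, by omega⟩ ×ˢ P ⟨2*c.1+1, by omega⟩ ⊆ O c := by
    intro c
    have e0 : P ⟨2*c.1, by omega⟩ = U0 c := by
      rw [hPdef]
      dsimp only
      rw [if_pos (by omega)]
      exact congrArg U0 (Fin.ext (show 2*c.1/2 = c.1 by omega))
    have e1 : P ⟨2*c.1+1, by omega⟩ = V0 c := by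
      rw [hPdef]
      dsimp only
      rw [if_neg (by omega)]
      exact congrArg V0 (Fin.ext (show (2*c.1+1)/2 = c.1 by omega))
    rw [e0, e1]
    exact hUV0 c
  -- pass 1 : assign colors to all pairs
  obtain ⟨B1, hs1, ho1, hn1, hc1⟩ := color_pass hO hOd
    ((Finset.univ : Finset (Fin (2*r) × Fin (2*r))).toList) hPo hPn
  -- pass 2 : persistent colors
  obtain ⟨B2, hs2, ho2, hn2, hc2⟩ := pers_pass hO hOd
    ((Finset.univ : Finset (Fin (2*r))).toList) ho1 hn1
  -- pass 3 : disjointification + diameter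
  obtain ⟨p, hpmem, hpne⟩ := distinct_points ((Finset.univ : Finset (Fin (2*r))).toList)
    (Finset.univ.nodup_toList) ho2 hn2
  have hpne' : ∀ k k', k ≠ k' → p k ≠ p k' := fun k k' h =>
    hpne k (Finset.mem_toList.2 (Finset.mem_univ _)) k' (Finset.mem_toList.2 (Finset.mem_univ _)) h
  have hoffne : (Finset.univ.offDiag : Finset (Fin (2*r) × Fin (2*r))).Nonempty := by
    refine ⟨(⟨0, by omega⟩, ⟨1, by omega⟩), Finset.mem_offDiag.2 ⟨Finset.mem_univ _, Finset.mem_univ _, ?_⟩⟩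
    intro h
    have := congrArg Fin.val h
    simp at this
  set δ : ℝ≥0∞ := Finset.univ.offDiag.inf' hoffne
    (fun q => min (edist (p q.1) (p q.2)) 1) with hδdef
  have hδpos : 0 < δ := by
    rw [hδdef, Finset.lt_inf'_iff]
    intro q hq
    exact lt_min (edist_pos.2 (hpne' q.1 q.2 (Finset.mem_offDiag.1 hq).2.2)) one_pos
  have hδle : ∀ k k', k ≠ k' → δ ≤ min (edist (p k) (p k')) 1 := by
    intro k k' h
    have hmem : ((k, k') : Fin (2*r) × Fin (2*r)) ∈ Finset.univ.offDiag :=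
      Finset.mem_offDiag.2 ⟨Finset.mem_univ _, Finset.mem_univ _, h⟩
    exact Finset.inf'_le _ hmem
  set ε : ℝ≥0∞ := min (δ/2/2) (2⁻¹/2) with hεdef
  have hεpos : 0 < ε := by
    refine lt_min (ENNReal.div_pos (ne_of_gt (ENNReal.div_pos hδpos.ne' (by norm_num))) (by norm_num)) ?_
    exact ENNReal.div_pos (by norm_num) (by norm_num)
  have h2ε1 : 2 * ε ≤ 2⁻¹ := by
    calc 2 * ε ≤ 2 * (2⁻¹/2) := by gcongr; exact min_le_right _ _
      _ = 2⁻¹/2 + 2⁻¹/2 := two_mul _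
      _ = 2⁻¹ := ENNReal.add_halves _
  have h2εd : ∀ k k', k ≠ k' → 2 * ε < edist (p k) (p k') := by
    intro k k' h
    refine two_mul_lt (hpne' k k' h) ?_
    refine (min_le_left _ _).trans ?_
    gcongr
    exact hδle k k' h
  set B3 : Fin (2*r) → Set X := fun k => B2 k ∩ EMetric.ball (p k) ε with hB3def
  have ho3 : ∀ k, IsOpen (B3 k) := fun k => (ho2 k).inter EMetric.isOpen_ball
  have hn3 : ∀ k, (B3 k).Nonempty := fun k => ⟨p k, hpmem k, EMetric.mem_ball_self hεpos⟩
  have hs3 : ∀ k, B3 k ⊆ B2 k := fun k => inter_subset_left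
  have hball3 : ∀ k, B3 k ⊆ EMetric.ball (p k) ε := fun k => inter_subset_right
  -- pass 4 : W0
  obtain ⟨B4, hs4, ho4, hn4, hW4⟩ := shrink_pass
    ((Finset.univ : Finset (Fin (2*r) × Fin (2*r))).toList) ho3 hn3 hW0o hW0d
  have hs41 : ∀ k, B4 k ⊆ B1 k := fun k => (hs4 k).trans ((hs3 k).trans (hs2 k))
  -- pick persistent colors
  have hc2' : ∀ k, ∃ c, Pers (O c) (B2 k) := fun k =>
    hc2 k (Finset.mem_toList.2 (Finset.mem_univ _))
  choose ci hci using hc2'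
  -- pick pair colors
  have hc1' : ∀ k k', k ≠ k' → ∃ c, B4 k ×ˢ B4 k' ⊆ O c := by
    intro k k' h
    obtain ⟨c, hc⟩ := hc1 (k, k') (Finset.mem_toList.2 (Finset.mem_univ _)) h
    exact ⟨c, fun q hq => hc ⟨hs41 _ hq.1, hs41 _ hq.2⟩⟩
  set v : Fin (2*r) → Fin (2*r) → Fin r := fun k k' =>
    if k.1 % 2 = 0 ∧ k'.1 = k.1 + 1 then ⟨k.1/2, by have := k.isLt; omega⟩
    else if h : k ≠ k' then (hc1' k k' h).choose else ⟨0, hr⟩ with hvdef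
  refine ⟨B4, ci, v, ho4, hn4, ?_, ?_, ?_, ?_, ?_, ?_⟩
  · -- diameter
    intro k
    have := diam_le_of_subset_ball ((hs4 k).trans (hball3 k))
    calc EMetric.diam (B4 k) ≤ 2 * ε := this
      _ ≤ 2⁻¹ := h2ε1
      _ ≤ 1 := by norm_num
  · -- disjoint closures
    intro k k' h
    refine Disjoint.mono (closure_subset_of_subset_ball ((hs4 k).trans (hball3 k)))
      (closure_subset_of_subset_ball ((hs4 k').trans (hball3 k'))) ?_
    exact disj_closedBall (h2εd k k' h)
  · -- W0
    intro k k' h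
    exact hW4 (k, k') (Finset.mem_toList.2 (Finset.mem_univ _)) h
  · -- O-inclusion with value v
    intro k k' h
    rw [hvdef]
    dsimp only
    by_cases hdes : k.1 % 2 = 0 ∧ k'.1 = k.1 + 1
    · rw [if_pos hdes]
      set c : Fin r := ⟨k.1/2, by have := k.isLt; omega⟩ with hcdef
      have hPk : P k = U0 c := by
        rw [hPdef]
        dsimp only
        rw [if_pos hdes.1]
      have hPk' : P k' = V0 c := by
        rw [hPdef]
        dsimp only
        rw [if_neg (by omega)]
        exact congrArg V0 (Fin.ext (show k'.1/2 = k.1/2 by omega))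
      intro q hq
      refine hUV0 c ⟨?_, ?_⟩
      · have h1 := hs1 k (hs41 k hq.1)
        rwa [hPk] at h1
      · have h1 := hs1 k' (hs41 k' hq.2)
        rwa [hPk'] at h1
    · rw [if_neg hdes, dif_pos h]
      exact (hc1' k k' h).choose_spec
  · -- persistence
    intro k
    exact (hci k).mono ((hs4 k).trans (hs3 k))
  · -- designated values
    intro c
    rw [hvdef]
    dsimp only
    rw [if_pos ⟨show (2*c.1) % 2 = 0 by omega, rfl⟩]
    exact Fin.ext (show (2*c.1)/2 = c.1 by omega)

def res (a : ℕ → Bool) (n : ℕ) : Fin n → Bool := fun i => a i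

lemma res_succ (a : ℕ → Bool) (n : ℕ) : res a (n+1) = Fin.snoc (res a n) (a n) := by
  funext i
  refine Fin.lastCases ?_ ?_ i
  · simp [res, Fin.snoc_last]
  · intro j
    simp [res, Fin.snoc_castSucc]

theorem main_aux {X : Type*} [MetricSpace X] [CompleteSpace X] [PerfectSpace X]
    (r : ℕ) (hr : 2 ≤ r) (f : X × X → Fin r)
    (hsymm : ∀ x y : X, f (x, y) = f (y, x))
    (hBP : ∀ c : Fin r, BaireMeasurableSet (f ⁻¹' {c}))
    (hnonmeagre : ∀ c : Fin r,
      ¬ IsMeagre {p : X × X | p.1 ≠ p.2 ∧ f p = c}) :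
    ∃ (s : ℕ), s ≤ 2 * r ∧
      ∃ C : Fin s → Set X,
        (∀ i j, i ≠ j → Disjoint (C i) (C j)) ∧
        (∀ i, (C i).Nonempty ∧ IsCompact (C i) ∧ Perfect (C i) ∧
          IsTotallyDisconnected (C i)) ∧
        ∃ (cin : Fin s → Fin r) (cbet : Fin s → Fin s → Fin r),
          (∀ i, ∀ x ∈ C i, ∀ y ∈ C i, x ≠ y → f (x, y) = cin i) ∧
          (∀ i j, i ≠ j → ∀ x ∈ C i, ∀ y ∈ C j, f (x, y) = cbet i j) ∧
          (∀ c : Fin r, (∃ i, cin i = c) ∨ ∃ i j, i ≠ j ∧ cbet i j = c) := by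
  classical
  -- Step 1 : open approximations of the color classes
  have hBP' : ∀ c, ∃ u : Set (X × X), IsOpen u ∧ f ⁻¹' {c} =ᵇ u := fun c =>
    (hBP c).residualEq_isOpen
  choose O0 hO0o hO0e using hBP'
  set M0 : Fin r → Set (X × X) := fun c => {p | ¬ ((p ∈ f ⁻¹' {c}) = (p ∈ O0 c))} with hM0def
  have hM0 : ∀ c, IsMeagre (M0 c) := by
    intro c
    have h1 : {p : X × X | (p ∈ f ⁻¹' {c}) = (p ∈ O0 c)} ∈ residual (X × X) := hO0e c
    rw [IsMeagre, hM0def]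
    have : {p : X × X | ¬ ((p ∈ f ⁻¹' {c}) = (p ∈ O0 c))}ᶜ
        = {p : X × X | (p ∈ f ⁻¹' {c}) = (p ∈ O0 c)} := by
      ext p; simp
    rw [this]
    exact h1
  have hM0key : ∀ c p, p ∉ M0 c → (f p = c ↔ p ∈ O0 c) := by
    intro c p hp
    rw [hM0def] at hp
    simp only [mem_setOf_eq, not_not] at hp
    constructor
    · intro h; rw [← hp]; exact h
    · intro h; have := hp ▸ h; exact this
  -- symmetrized open sets and meagre exceptional sets
  set O : Fin r → Set (X × X) := fun c => O0 c ∩ Prod.swap ⁻¹' O0 c with hOdef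
  set M : Fin r → Set (X × X) := fun c => M0 c ∪ Prod.swap ⁻¹' M0 c with hMdef
  have hOo : ∀ c, IsOpen (O c) := fun c => (hO0o c).inter ((hO0o c).preimage continuous_swap)
  have hOs : ∀ c (p : X × X), p ∈ O c → p.swap ∈ O c := by
    intro c p hp
    exact ⟨hp.2, by simpa using hp.1⟩
  have hM : ∀ c, IsMeagre (M c) := by
    intro c
    have h2 : IsMeagre (Prod.swap ⁻¹' M0 c) :=
      (hM0 c).preimage_of_isOpenMap continuous_swap
        (Homeomorph.prodComm X X).isOpenMap
    rw [hMdef]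
    rw [IsMeagre] at *
    simp only [Set.compl_union]
    exact Filter.inter_mem (hM0 c) h2
  have hfsw : ∀ (p : X × X), f p.swap = f p := fun p => hsymm p.2 p.1
  have hkey : ∀ c (p : X × X), p ∉ M c → (f p = c ↔ p ∈ O c) := by
    intro c p hp
    have hp1 : p ∉ M0 c := fun h => hp (Or.inl h)
    have hp2 : p.swap ∉ M0 c := fun h => hp (Or.inr h)
    constructor
    · intro h
      refine ⟨(hM0key c p hp1).1 h, ?_⟩
      have : f p.swap = c := (hfsw p).trans h
      exact (hM0key c p.swap hp2).1 this
    · intro h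
      exact (hM0key c p hp1).2 h.1
  -- density of the union of the open sets
  have hcompl : (⋃ c, O c)ᶜ ⊆ ⋃ c, M c := by
    intro p hp
    by_contra hpM
    simp only [mem_iUnion, not_exists] at hpM
    have : p ∈ O (f p) := (hkey (f p) p (hpM (f p))).1 rfl
    exact hp (mem_iUnion.2 ⟨f p, this⟩)
  have hMres : (⋃ c, M c)ᶜ ∈ residual (X × X) := by
    rw [Set.compl_iUnion]
    exact (countable_iInter_mem).2 fun c => hM c
  have hOd : Dense (⋃ c, O c) := by
    refine dense_of_mem_residual (Filter.mem_of_superset hMres ?_)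
    intro p hp
    by_contra hpO
    exact hp (hcompl hpO)
  -- witnesses for the colors
  have hcol : ∀ c, ∃ p : X × X, p ∈ O c ∧ p.1 ≠ p.2 := by
    intro c
    have h1 : ¬ {p : X × X | p.1 ≠ p.2 ∧ f p = c} ⊆ M c := by
      intro h
      exact hnonmeagre c ((hM c).mono h)
    obtain ⟨p, hp1, hp2⟩ := Set.not_subset.1 h1
    exact ⟨p, (hkey c p hp2).1 hp1.2, hp1.1⟩
  -- the comeagre set G and the dense open sets W
  set G : Set (X × X) := ⋂ c, (M c)ᶜ with hGdef
  have hGres : G ∈ residual (X × X) := (countable_iInter_mem).2 fun c => hM c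
  have hGkey : ∀ c (p : X × X), p ∈ G → p ∈ O c → f p = c := by
    intro c p hpG hpO
    exact (hkey c p (by simpa [hGdef] using mem_iInter.1 hpG c)).2 hpO
  obtain ⟨W, hWo, hWd, hWle, hWsub⟩ : ∃ W : ℕ → Set (X × X), (∀ n, IsOpen (W n)) ∧
      (∀ n, Dense (W n)) ∧ (∀ m n, m ≤ n → W n ⊆ W m) ∧ (⋂ n, W n) ⊆ G := by
    obtain ⟨S, hSo, hSd, hScnt, hSsub⟩ := mem_residual_iff.1 hGres
    rcases S.eq_empty_or_nonempty with rfl | hSne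
    · refine ⟨fun _ => univ, fun _ => isOpen_univ, fun _ => dense_univ,
        fun _ _ _ => subset_rfl, ?_⟩
      simpa using hSsub
    · obtain ⟨e, rfl⟩ := hScnt.exists_eq_range hSne
      refine ⟨fun n => ⋂ k : Fin (n+1), e k, ?_, ?_, ?_, ?_⟩
      · exact fun n => isOpen_iInter_of_finite fun k => hSo _ (mem_range_self _)
      · exact fun n => dense_iInter_of_isOpen (fun k => hSo _ (mem_range_self _))
          (fun k => hSd _ (mem_range_self _))
      · intro m n hmn p hp
        exact mem_iInter.2 fun k => mem_iInter.1 hp ⟨k.1, by omega⟩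
      · intro p hp
        refine hSsub ?_
        rw [mem_sInter]
        rintro t ⟨k, rfl⟩
        exact mem_iInter.1 (mem_iInter.1 hp k) ⟨k, by omega⟩
  -- Step 2 : base level
  obtain ⟨L0f, ci, v, hb_o, hb_n, hb_d, hb_dis, hb_W, hb_O, hb_prs, hb_des⟩ :=
    base_exists (by omega : 1 ≤ r) hOo hOd hcol (hWo 0) (hWd 0)
  have hInv0 : Inv O W ci v 0 (fun (k : Fin (2*r)) (_ : Fin 0 → Bool) => L0f k) := by
    constructor
    · exact fun k σ => hb_n k
    · exact fun k σ => hb_o k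
    · intro k σ
      rw [pow_zero]
      exact hb_d k
    · intro k σ k' σ' hd
      have hσ : σ = σ' := Subsingleton.elim _ _
      rcases hd with hk | hk
      · exact hb_dis k k' hk
      · exact absurd hσ hk
    · intro k σ k' σ' hd
      have hσ : σ = σ' := Subsingleton.elim _ _
      rcases hd with hk | hk
      · exact hb_W k k' hk
      · exact absurd hσ hk
    · intro k σ k' σ' hd
      have hσ : σ = σ' := Subsingleton.elim _ _
      rcases hd with hk | hk
      · rw [col, if_neg hk]
        exact hb_O k k' hk
      · exact absurd hσ hk
    · exact fun k σ => hb_prs k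
  -- Step 3 : the fusion sequence
  obtain ⟨F, hF0, hFrel⟩ := nat_rec_chain (P := fun n =>
      {L : Fin (2*r) → (Fin n → Bool) → Set X // Inv O W ci v n L})
    (R := fun n x y => ∀ k σ b, closure (y.1 k (Fin.snoc σ b)) ⊆ x.1 k σ)
    ⟨fun k _ => L0f k, hInv0⟩
    (by
      intro n x
      obtain ⟨L', hL', hrel⟩ := inv_step hOo hOs hWo hWd x.2
      exact ⟨⟨L', hL'⟩, hrel⟩)
  set Lev : ∀ n, Fin (2*r) → (Fin n → Bool) → Set X := fun n => (F n).1 with hLevdef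
  have hInv : ∀ n, Inv O W ci v n (Lev n) := fun n => (F n).2
  have hchain : ∀ (k : Fin (2*r)) (a : ℕ → Bool) (n : ℕ),
      closure (Lev (n+1) k (res a (n+1))) ⊆ Lev n k (res a n) := by
    intro k a n
    rw [res_succ]
    exact hFrel n k (res a n) (a n)
  have hmono : ∀ (k : Fin (2*r)) (a : ℕ → Bool) (n m : ℕ), n ≤ m →
      closure (Lev m k (res a m)) ⊆ closure (Lev n k (res a n)) := by
    intro k a n m hnm
    induction m, hnm using Nat.le_induction with
    | base => exact subset_rfl
    | succ m hnm ih =>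
      refine subset_trans ?_ ih
      refine subset_trans (hchain k a m) subset_closure
  -- Step 4 : limit points
  have hzex : ∀ (k : Fin (2*r)) (a : ℕ → Bool) (n : ℕ), ∃ x, x ∈ Lev n k (res a n) :=
    fun k a n => (hInv n).ne k (res a n)
  choose z hz using hzex
  have hzcl : ∀ k a n m, n ≤ m → z k a m ∈ closure (Lev n k (res a n)) :=
    fun k a n m hnm => hmono k a n m hnm (subset_closure (hz k a m))
  have hcauchy : ∀ k a, CauchySeq (z k a) := by
    intro k a
    refine cauchySeq_of_edist_le_geometric 2⁻¹ 1 ?_ ?_ ?_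
    · simp [ENNReal.inv_lt_one]
    · exact one_ne_top
    · intro n
      rw [one_mul]
      have h1 : z k a n ∈ closure (Lev n k (res a n)) := subset_closure (hz k a n)
      have h2 : z k a (n+1) ∈ closure (Lev n k (res a n)) := hzcl k a n (n+1) (by omega)
      calc edist (z k a n) (z k a (n+1)) ≤ EMetric.diam (closure (Lev n k (res a n))) :=
            EMetric.edist_le_diam_of_mem h1 h2
        _ = EMetric.diam (Lev n k (res a n)) := EMetric.diam_closure _
        _ ≤ 2⁻¹ ^ n := (hInv n).dia k (res a n)
  have hlim : ∀ k a, ∃ x, Tendsto (z k a) atTop (𝓝 x) :=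
    fun k a => cauchySeq_tendsto_of_complete (hcauchy k a)
  choose g hg using hlim
  have hgcl : ∀ k a n, g k a ∈ closure (Lev n k (res a n)) := by
    intro k a n
    refine isClosed_closure.mem_of_tendsto (hg k a) ?_
    exact eventually_atTop.2 ⟨n, fun m hm => hzcl k a n m hm⟩
  have hgmem : ∀ k a n, g k a ∈ Lev n k (res a n) := fun k a n =>
    hchain k a n (hgcl k a (n+1))
  have hgdist : ∀ k a a' n, res a n = res a' n → edist (g k a) (g k a') ≤ 2⁻¹ ^ n := by
    intro k a a' n hres
    have h1 := hgcl k a n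
    have h2 := hgcl k a' n
    rw [← hres] at h2
    calc edist (g k a) (g k a') ≤ EMetric.diam (closure (Lev n k (res a n))) :=
          EMetric.edist_le_diam_of_mem h1 h2
      _ = EMetric.diam (Lev n k (res a n)) := EMetric.diam_closure _
      _ ≤ 2⁻¹ ^ n := (hInv n).dia k (res a n)
  have hgne : ∀ k k' a a' n, (k ≠ k' ∨ res a n ≠ res a' n) → g k a ≠ g k' a' := by
    intro k k' a a' n hd heq
    have hdisj := (hInv n).dis k (res a n) k' (res a' n) hd
    exact Set.disjoint_left.1 hdisj (hgcl k a n) (heq ▸ hgcl k' a' n)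
  -- Step 5 : continuity of the limit maps and the Cantor sets
  have hgcont : ∀ k, Continuous (g k) := by
    intro k
    rw [continuous_iff_continuousAt]
    intro a
    rw [ContinuousAt, EMetric.tendsto_nhds]
    intro ε hε
    obtain ⟨n, hn⟩ := ENNReal.exists_inv_two_pow_lt hε.ne'
    have hopen : IsOpen {a' : ℕ → Bool | res a' n = res a n} := by
      have : {a' : ℕ → Bool | res a' n = res a n}
          = ⋂ i : Fin n, (fun a' : ℕ → Bool => a' i.1) ⁻¹' {a i.1} := by
        ext a'
        simp only [mem_setOf_eq, mem_iInter, mem_preimage, mem_singleton_iff]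
        constructor
        · intro h i
          exact congrFun h i
        · intro h
          funext i
          exact h i
      rw [this]
      exact isOpen_iInter_of_finite fun i =>
        (continuous_apply (i.1 : ℕ)).isOpen_preimage _ (isOpen_discrete _)
    filter_upwards [hopen.mem_nhds (by simp)] with a' ha'
    exact lt_of_le_of_lt (hgdist k a' a n ha') hn
  set C : Fin (2*r) → Set X := fun k => Set.range (g k) with hCdef
  have hCne : ∀ k, (C k).Nonempty := fun k => ⟨g k (fun _ => false), mem_range_self _⟩
  have hCcomp : ∀ k, IsCompact (C k) := fun k => isCompact_range (hgcont k)
  -- disjointness of the Cantor sets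
  have hCdisj : ∀ k k', k ≠ k' → Disjoint (C k) (C k') := by
    intro k k' hkk
    rw [Set.disjoint_left]
    rintro x ⟨a, rfl⟩ ⟨a', heq⟩
    exact hgne k' k a' a 0 (Or.inl (Ne.symm hkk)) heq
  -- perfectness
  have hCperf : ∀ k, Perfect (C k) := by
    intro k
    refine ⟨(hCcomp k).isClosed, ?_⟩
    rintro x ⟨a, rfl⟩
    rw [accPt_iff_nhds]
    intro U hU
    obtain ⟨ε, hε, hball⟩ := EMetric.mem_nhds_iff.1 hU
    obtain ⟨n, hn⟩ := ENNReal.exists_inv_two_pow_lt hε.ne'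
    set a' : ℕ → Bool := Function.update a n (!(a n)) with ha'def
    have hres : res a' n = res a n := by
      funext i
      show a' i.1 = a i.1
      rw [ha'def]
      exact Function.update_of_ne (Nat.ne_of_lt i.isLt) _ _
    have hresne : res a' (n+1) ≠ res a (n+1) := by
      intro h
      have h2 := congrFun h ⟨n, by omega⟩
      rw [ha'def] at h2
      simp only [res] at h2
      rw [Function.update_self] at h2
      exact (Bool.not_ne_self (a n)) h2
    refine ⟨g k a', ⟨?_, mem_range_self _⟩, ?_⟩
    · refine hball ?_
      rw [EMetric.mem_ball]
      exact lt_of_le_of_lt (hgdist k a' a n hres) hn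
    · exact hgne k k a' a (n+1) (Or.inr hresne)
  -- total disconnectedness
  have hCtd : ∀ k, IsTotallyDisconnected (C k) := by
    intro k
    intro t hts htconn
    intro xx hxx yy hyy
    by_contra hne
    obtain ⟨a, ha⟩ := hts hxx
    obtain ⟨a', ha'⟩ := hts hyy
    have haa : a ≠ a' := by
      rintro rfl
      exact hne (ha.symm.trans ha')
    obtain ⟨n, hn⟩ := Function.ne_iff.1 haa
    have hresne : res a (n+1) ≠ res a' (n+1) := by
      intro h
      exact hn (congrFun h ⟨n, by omega⟩)
    set A : Set X := C k ∩ closure (Lev (n+1) k (res a (n+1))) with hAdef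
    set B : Set X := C k ∩ ⋃ σ ∈ {σ : Fin (n+1) → Bool | σ ≠ res a (n+1)},
      closure (Lev (n+1) k σ) with hBdef
    have hAcomp : IsCompact A := (hCcomp k).inter_right isClosed_closure
    have hBcomp : IsCompact B := by
      refine (hCcomp k).inter_right ?_
      exact Set.Finite.isClosed_biUnion (Set.toFinite _) fun σ _ => isClosed_closure
    have hABdisj : Disjoint A B := by
      rw [Set.disjoint_left]
      rintro w ⟨-, hw1⟩ ⟨-, hw2⟩
      obtain ⟨σ, hσne, hw2⟩ := by simpa using hw2
      have hd := (hInv (n+1)).dis k (res a (n+1)) k σ (Or.inr (Ne.symm hσne))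
      exact Set.disjoint_left.1 hd hw1 hw2
    have hcover : t ⊆ A ∪ B := by
      intro w hw
      obtain ⟨b, rfl⟩ := hts hw
      by_cases hb : res b (n+1) = res a (n+1)
      · exact Or.inl ⟨mem_range_self _, hb ▸ hgcl k b (n+1)⟩
      · refine Or.inr ⟨mem_range_self _, ?_⟩
        simp only [mem_iUnion, mem_setOf_eq]
        exact ⟨res b (n+1), hb, hgcl k b (n+1)⟩
    obtain ⟨U, V, hUo, hVo, hAU, hBV, hUV⟩ :=
      SeparatedNhds.of_isCompact_isCompact hAcomp hBcomp hABdisj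
    have hxxA : xx ∈ A := by
      rw [← ha]
      exact ⟨mem_range_self _, hgcl k a (n+1)⟩
    have hyyB : yy ∈ B := by
      rw [← ha']
      refine ⟨mem_range_self _, ?_⟩
      simp only [mem_iUnion, mem_setOf_eq]
      exact ⟨res a' (n+1), Ne.symm hresne, hgcl k a' (n+1)⟩
    have := htconn U V hUo hVo (hcover.trans (union_subset_union hAU hBV))
      ⟨xx, hxx, hAU hxxA⟩ ⟨yy, hyy, hBV hyyB⟩
    obtain ⟨w, -, hwU, hwV⟩ := this
    exact Set.disjoint_left.1 hUV hwU hwV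
  -- Step 6 : color computations
  have hinG : ∀ (k k' : Fin (2*r)) (a a' : ℕ → Bool) (N : ℕ),
      (∀ m, N ≤ m → (k ≠ k' ∨ res a m ≠ res a' m)) → (g k a, g k' a') ∈ G := by
    intro k k' a a' N hd
    refine hWsub (mem_iInter.2 fun m => ?_)
    rcases le_or_gt N m with hm | hm
    · exact (hInv m).inW k (res a m) k' (res a' m) (hd m hm) (Set.mk_mem_prod (hgmem k a m) (hgmem k' a' m))
    · refine hWle m N (by omega) ?_
      exact (hInv N).inW k (res a N) k' (res a' N) (hd N le_rfl)
        (Set.mk_mem_prod (hgmem k a N) (hgmem k' a' N))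
  have hbet : ∀ k k', k ≠ k' → ∀ x ∈ C k, ∀ y ∈ C k', f (x, y) = v k k' := by
    intro k k' hkk x hx y hy
    obtain ⟨a, rfl⟩ := hx
    obtain ⟨a', rfl⟩ := hy
    have hG : (g k a, g k' a') ∈ G := hinG k k' a a' 0 (fun m _ => Or.inl hkk)
    have hO' : (g k a, g k' a') ∈ O (v k k') := by
      have h1 := (hInv 0).inO k (res a 0) k' (res a' 0) (Or.inl hkk)
        (Set.mk_mem_prod (hgmem k a 0) (hgmem k' a' 0))
      rwa [col, if_neg hkk] at h1
    exact hGkey _ _ hG hO'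
  have hwithin : ∀ k, ∀ x ∈ C k, ∀ y ∈ C k, x ≠ y → f (x, y) = ci k := by
    intro k x hx y hy hxy
    obtain ⟨a, rfl⟩ := hx
    obtain ⟨a', rfl⟩ := hy
    have haa : a ≠ a' := by
      rintro rfl
      exact hxy rfl
    obtain ⟨n, hn⟩ := Function.ne_iff.1 haa
    have hresne : ∀ m, n+1 ≤ m → res a m ≠ res a' m := by
      intro m hm h
      exact hn (congrFun h ⟨n, by omega⟩)
    have hG : (g k a, g k a') ∈ G := hinG k k a a' (n+1) (fun m hm => Or.inr (hresne m hm))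
    have hO' : (g k a, g k a') ∈ O (ci k) := by
      have h1 := (hInv (n+1)).inO k (res a (n+1)) k (res a' (n+1))
        (Or.inr (hresne (n+1) le_rfl)) (Set.mk_mem_prod (hgmem k a (n+1)) (hgmem k a' (n+1)))
      rwa [col, if_pos rfl] at h1
    exact hGkey _ _ hG hO'
  -- Step 7 : conclusion
  refine ⟨2*r, le_rfl, C, hCdisj, fun k => ⟨hCne k, hCcomp k, hCperf k, hCtd k⟩,
    ci, v, hwithin, hbet, ?_⟩
  intro c
  refine Or.inr ⟨⟨2*c.1, by omega⟩, ⟨2*c.1+1, by omega⟩, ?_, hb_des c⟩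
  intro h
  have := congrArg Fin.val h
  simp only at this
  omega


end Stmt19

/-- **Infinite balanced Ramsey theorem.** Let `X` be a perfect Polish space and
`f : [X]² → [r]` a Baire measurable coloring (viewed as a symmetric map on `X × X`)
such that each color class is non-meagre in `X × X`.  Then there exist `s ≤ 2r`
pairwise disjoint Cantor sets `C₁, …, C_s ⊆ X` such that each `[C_i]²` is
monochromatic, each bipartite pair `C_i × C_j` is monochromatic, and all `r` colors
appear among these cliques and bipartite graphs. -/
theorem stmt_19 {X : Type*} [TopologicalSpace X] [PolishSpace X] [PerfectSpace X]
    (r : ℕ) (hr : 2 ≤ r) (f : X × X → Fin r)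
    (hsymm : ∀ x y : X, f (x, y) = f (y, x))
    (hBP : ∀ c : Fin r, BaireMeasurableSet (f ⁻¹' {c}))
    (hnonmeagre : ∀ c : Fin r,
      ¬ IsMeagre {p : X × X | p.1 ≠ p.2 ∧ f p = c}) :
    ∃ (s : ℕ), s ≤ 2 * r ∧
      ∃ C : Fin s → Set X,
        (∀ i j, i ≠ j → Disjoint (C i) (C j)) ∧
        (∀ i, (C i).Nonempty ∧ IsCompact (C i) ∧ Perfect (C i) ∧
          IsTotallyDisconnected (C i)) ∧
        ∃ (cin : Fin s → Fin r) (cbet : Fin s → Fin s → Fin r),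
          (∀ i, ∀ x ∈ C i, ∀ y ∈ C i, x ≠ y → f (x, y) = cin i) ∧
          (∀ i j, i ≠ j → ∀ x ∈ C i, ∀ y ∈ C j, f (x, y) = cbet i j) ∧
          (∀ c : Fin r, (∃ i, cin i = c) ∨ ∃ i j, i ≠ j ∧ cbet i j = c) := by
  letI := TopologicalSpace.upgradeIsCompletelyMetrizable X
  exact Stmt19.main_aux r hr f hsymm hBP hnonmeagre
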